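/- Let H be a complex Hilbert space, A, B : H → H bounded skew-adjoint operators, and P : H → H a bounded self-adjoint operator with Re⟨Pψ, ψ⟩ ≥ 0 for all ψ ∈ H and P∘A = A∘P. Let C ≥ 0 satisfy |Re⟨Pψ, Bψ⟩| ≤ C·Re⟨Pψ, ψ⟩ for all ψ ∈ H. Let u : ℝ → ℝ be continuous and ψ : ℝ → H differentiable with ψ'(t) = A ψ(t) + u(t)·B ψ(t) for all t. Then for every T ≥ 0, Re⟨P ψ(T), ψ(T)⟩ ≤ exp(2C·∫₀^T |u(s)| ds) · Re⟨P ψ(0), ψ(0)⟩. -/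

import Mathlib

open ContinuousLinearMap MeasureTheory intervalIntegral

/-- Abstract growth bound for weakly-coupled systems: if `P` is a bounded self-adjoint
nonnegative operator commuting with the skew-adjoint drift `A`, and
`|Re⟨Pψ, Bψ⟩| ≤ C·Re⟨Pψ, ψ⟩` for all `ψ`, then along any solution of
`ψ' = (A + u(t)B)ψ` one has
`Re⟨Pψ(T), ψ(T)⟩ ≤ exp(2C·∫₀^T |u|)·Re⟨Pψ(0), ψ(0)⟩` for all `T ≥ 0`. -/
theorem weak_coupling_growth_bound
    {H : Type*} [NormedAddCommGroup H] [InnerProductSpace ℂ H] [CompleteSpace H]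
    (A B P : H →L[ℂ] H) (hA : ContinuousLinearMap.adjoint A = -A)
    (hB : ContinuousLinearMap.adjoint B = -B)
    (hP : ContinuousLinearMap.adjoint P = P)
    (hPpos : ∀ ψ : H, 0 ≤ (inner ℂ (P ψ) ψ : ℂ).re)
    (hPA : P ∘L A = A ∘L P)
    (C : ℝ) (hC : 0 ≤ C)
    (hCbound : ∀ ψ : H, |(inner ℂ (P ψ) (B ψ) : ℂ).re| ≤ C * (inner ℂ (P ψ) ψ : ℂ).re)
    (u : ℝ → ℝ) (hu : Continuous u) (ψ : ℝ → H)
    (hψ : ∀ t : ℝ, HasDerivAt ψ (A (ψ t) + u t • B (ψ t)) t) :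
    ∀ T : ℝ, 0 ≤ T →
      (inner ℂ (P (ψ T)) (ψ T) : ℂ).re
        ≤ Real.exp (2 * C * ∫ s in (0:ℝ)..T, |u s|) * (inner ℂ (P (ψ 0)) (ψ 0) : ℂ).re := by
  intro T hT
  set f : ℝ → ℝ := fun t => (inner ℂ (P (ψ t)) (ψ t) : ℂ).re with hfdef
  -- derivative of f
  have hf' : ∀ t, HasDerivAt f (2 * u t * (inner ℂ (P (ψ t)) (B (ψ t)) : ℂ).re) t := by
    intro t
    have hPψ : HasDerivAt (fun s => P (ψ s)) (P (A (ψ t) + u t • B (ψ t))) t :=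
      ((P.restrictScalars ℝ).hasFDerivAt.comp_hasDerivAt t (hψ t))
    have h1 : HasDerivAt (fun s => (inner ℂ (P (ψ s)) (ψ s) : ℂ))
        ((inner ℂ (P (ψ t)) (A (ψ t) + u t • B (ψ t)) : ℂ)
          + (inner ℂ (P (A (ψ t) + u t • B (ψ t))) (ψ t) : ℂ)) t :=
      HasDerivAt.inner ℂ hPψ (hψ t)
    have h2 : HasDerivAt f (((inner ℂ (P (ψ t)) (A (ψ t) + u t • B (ψ t)) : ℂ)
          + (inner ℂ (P (A (ψ t) + u t • B (ψ t))) (ψ t) : ℂ)).re) t :=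
      (Complex.reCLM.hasFDerivAt.comp_hasDerivAt t h1)
    convert h2 using 1
    have hAval : A = -ContinuousLinearMap.adjoint A := by rw [hA, neg_neg]
    have hPA' : P (A (ψ t)) = A (P (ψ t)) := by
      have := congrFun (congrArg DFunLike.coe hPA) (ψ t)
      simpa using this
    have hAcancel : (inner ℂ (P (A (ψ t))) (ψ t) : ℂ) = - inner ℂ (P (ψ t)) (A (ψ t)) := by
      rw [hPA']
      conv_lhs => rw [hAval]
      simp [ContinuousLinearMap.adjoint_inner_left]
    have hPB : ((inner ℂ (P (B (ψ t))) (ψ t) : ℂ)).re = (inner ℂ (P (ψ t)) (B (ψ t)) : ℂ).re := by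
      have h3 : (inner ℂ (P (B (ψ t))) (ψ t) : ℂ) = inner ℂ (B (ψ t)) (P (ψ t)) := by
        conv_lhs => rw [← hP]
        rw [ContinuousLinearMap.adjoint_inner_left]
      rw [h3, ← inner_conj_symm, Complex.conj_re]
    have hsm : u t • B (ψ t) = ((u t : ℂ)) • B (ψ t) :=
      RCLike.real_smul_eq_coe_smul (K := ℂ) _ _
    simp only [hsm, _root_.map_smul, inner_smul_left, inner_smul_right, inner_add_left,
      inner_add_right, map_add, hAcancel, Complex.conj_ofReal]
    simp only [Complex.add_re, Complex.neg_re, Complex.mul_re, Complex.ofReal_re,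
      Complex.ofReal_im]
    rw [hPB]
    ring
  set v : ℝ → ℝ := fun t => ∫ s in (0:ℝ)..t, 2 * C * |u s| with hvdef
  have hcont : Continuous fun s => 2 * C * |u s| := by continuity
  have hv' : ∀ t, HasDerivAt v (2 * C * |u t|) t := by
    intro t
    exact intervalIntegral.integral_hasDerivAt_right
      (hcont.intervalIntegrable _ _)
      (hcont.stronglyMeasurableAtFilter _ _) hcont.continuousAt
  set g : ℝ → ℝ := fun t => f t * Real.exp (-(v t)) with hgdef
  have hg' : ∀ t, HasDerivAt g
      ((2 * u t * (inner ℂ (P (ψ t)) (B (ψ t)) : ℂ).re) * Real.exp (-(v t))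
        + f t * (Real.exp (-(v t)) * -(2 * C * |u t|))) t := by
    intro t
    exact (hf' t).mul ((hv' t).neg.exp)
  have hgderiv_nonpos : ∀ t, deriv g t ≤ 0 := by
    intro t
    rw [(hg' t).deriv]
    have hb : 2 * u t * (inner ℂ (P (ψ t)) (B (ψ t)) : ℂ).re ≤ 2 * C * |u t| * f t := by
      calc 2 * u t * (inner ℂ (P (ψ t)) (B (ψ t)) : ℂ).re
          ≤ |2 * u t * (inner ℂ (P (ψ t)) (B (ψ t)) : ℂ).re| := le_abs_self _
        _ = 2 * |u t| * |(inner ℂ (P (ψ t)) (B (ψ t)) : ℂ).re| := by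
            rw [abs_mul, abs_mul]; simp
        _ ≤ 2 * |u t| * (C * f t) := by
            apply mul_le_mul_of_nonneg_left (hCbound (ψ t)) (by positivity)
        _ = 2 * C * |u t| * f t := by ring
    nlinarith [Real.exp_pos (-(v t))]
  have hgcont : Continuous g := by
    have : Differentiable ℝ g := fun t => (hg' t).differentiableAt
    exact this.continuous
  have hanti : AntitoneOn g (Set.Icc 0 T) :=
    antitoneOn_of_deriv_nonpos (convex_Icc 0 T) hgcont.continuousOn
      (fun x _ => (hg' x).differentiableAt.differentiableWithinAt)
      (fun x _ => hgderiv_nonpos x)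
  have hgT : g T ≤ g 0 := hanti (Set.left_mem_Icc.2 hT) (Set.right_mem_Icc.2 hT) hT
  have hv0 : v 0 = 0 := by simp [hvdef]
  have hg0 : g 0 = f 0 := by simp [hgdef, hv0]
  have hvT : v T = 2 * C * ∫ s in (0:ℝ)..T, |u s| := by
    rw [hvdef]
    simp [intervalIntegral.integral_const_mul]
  have hfT : f T = g T * Real.exp (v T) := by
    rw [hgdef]
    simp [mul_assoc, ← Real.exp_add]
  rw [show (inner ℂ (P (ψ T)) (ψ T) : ℂ).re = f T from rfl,
    show (inner ℂ (P (ψ 0)) (ψ 0) : ℂ).re = f 0 from rfl, hfT, ← hvT]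
  calc g T * Real.exp (v T) ≤ g 0 * Real.exp (v T) :=
        mul_le_mul_of_nonneg_right hgT (Real.exp_pos _).le
    _ = Real.exp (v T) * f 0 := by rw [hg0]; ring
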